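/- Let A be a unital C*-algebra, H a complex Hilbert space, P ∈ B(H) positive, and Φ : A → B(H) a pure CP map with Φ(1) = P. Then Φ is both a P-C*-extreme point and a linear extreme point of CP^{(P)}(A,B(H)). -/

import Mathlib

open scoped ComplexOrder

noncomputable section

section Defs

variable {A H : Type*}
variable [NormedAddCommGroup H] [InnerProductSpace ℂ H]

/-- An operator on a complex inner ℂ product space is positive:
`0 ≤ ⟪x, T x⟫` for all `x`. -/
def IsPosOp (T : H →L[ℂ] H) : Prop := ∀ x : H, 0 ≤ (inner ℂ x (T x) : ℂ)

variable [Ring A] [StarRing A] [Algebra ℂ A]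

/-- Complete positivity of a linear map `Φ : A → B(H)`:
`∑_{i,j} ⟪h i, Φ(a i* a j) (h j)⟫ ≥ 0` for all finite families. -/
def IsCPMap (Φ : A →ₗ[ℂ] (H →L[ℂ] H)) : Prop :=
  ∀ (n : ℕ) (a : Fin n → A) (h : Fin n → H),
    0 ≤ ∑ i, ∑ j, (inner ℂ (h i) ((Φ (star (a i) * a j)) (h j)) : ℂ)

/-- `CP^{(P)}(A, B(H))`: the CP maps `Φ` with `Φ 1 = P`. -/
def CPP (P : H →L[ℂ] H) : Set (A →ₗ[ℂ] (H →L[ℂ] H)) := {Φ | IsCPMap Φ ∧ Φ 1 = P}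

/-- `CCP(A, B(H))`: the contractive CP maps, i.e. CP maps with `Φ 1 ≤ 1`. -/
def CCPmaps : Set (A →ₗ[ℂ] (H →L[ℂ] H)) := {Φ | IsCPMap Φ ∧ IsPosOp (1 - Φ 1)}

variable [CompleteSpace H]

/-- `Ad_T : X ↦ T* X T`, as a linear map on `B(H)`. -/
def conjAd (T : H →L[ℂ] H) : (H →L[ℂ] H) →ₗ[ℂ] (H →L[ℂ] H) where
  toFun X := star T * X * T
  map_add' X Y := by simp [add_mul, mul_add]
  map_smul' c X := by simp [mul_smul_comm, smul_mul_assoc]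

/-- `Φ ∈ CP^{(P)}` is a `P`-`C*`-extreme point of `CP^{(P)}(A, B(H))`:
whenever `Φ = ∑ Ad_{T j} ∘ Φs j` is a proper `P`-`C*`-convex combination of members of
`CP^{(P)}`, each `Φs j` equals `Ad_{S j} ∘ Φ` for some invertible `S j`. -/
def IsPCExtreme (P : H →L[ℂ] H) (Φ : A →ₗ[ℂ] (H →L[ℂ] H)) : Prop :=
  Φ ∈ CPP (A := A) P ∧
  ∀ (n : ℕ) (T : Fin n → (H →L[ℂ] H)) (Φs : Fin n → (A →ₗ[ℂ] (H →L[ℂ] H))),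
    (∀ j, IsUnit (T j)) → (∀ j, Φs j ∈ CPP (A := A) P) →
    (∑ j, star (T j) * P * T j) = P →
    Φ = ∑ j, (conjAd (T j)).comp (Φs j) →
    ∀ j, ∃ S : H →L[ℂ] H, IsUnit S ∧ Φs j = (conjAd S).comp Φ

/-- `Φ ∈ C` is a `C*`-extreme point of the `C*`-convex set `C`:
whenever `Φ = ∑ Ad_{T j} ∘ Φs j` is a proper `C*`-convex combination of members of `C`,
each `Φs j` is unitarily equivalent to `Φ`. -/
def IsCstarExtreme (C : Set (A →ₗ[ℂ] (H →L[ℂ] H))) (Φ : A →ₗ[ℂ] (H →L[ℂ] H)) : Prop :=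
  Φ ∈ C ∧
  ∀ (n : ℕ) (T : Fin n → (H →L[ℂ] H)) (Φs : Fin n → (A →ₗ[ℂ] (H →L[ℂ] H))),
    (∀ j, IsUnit (T j)) → (∀ j, Φs j ∈ C) →
    (∑ j, star (T j) * T j) = 1 →
    Φ = ∑ j, (conjAd (T j)).comp (Φs j) →
    ∀ j, ∃ U : H →L[ℂ] H, U ∈ unitary (H →L[ℂ] H) ∧ Φs j = (conjAd U).comp Φ

/-- `Φ ∈ C` is a linear extreme point of the convex set `C`. -/
def IsLinExtreme (C : Set (A →ₗ[ℂ] (H →L[ℂ] H))) (Φ : A →ₗ[ℂ] (H →L[ℂ] H)) : Prop :=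
  Φ ∈ C ∧
  ∀ (n : ℕ) (t : Fin n → ℝ) (Φs : Fin n → (A →ₗ[ℂ] (H →L[ℂ] H))),
    (∀ j, 0 < t j ∧ t j < 1) → (∀ j, Φs j ∈ C) → (∑ j, t j) = 1 →
    Φ = ∑ j, (t j : ℂ) • Φs j →
    ∀ j, Φs j = Φ

end Defs

section AuxLemmas

variable {A H : Type*}
variable [NormedAddCommGroup H] [InnerProductSpace ℂ H]
variable [Ring A] [StarRing A] [Algebra ℂ A]

@[simp] lemma conjAd_apply [CompleteSpace H] (T X : H →L[ℂ] H) :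
    conjAd T X = star T * X * T := rfl

lemma isCPMap_zero' : IsCPMap (0 : A →ₗ[ℂ] (H →L[ℂ] H)) := by
  intro n a h
  simp

lemma isCPMap_add' {f g : A →ₗ[ℂ] (H →L[ℂ] H)} (hf : IsCPMap f) (hg : IsCPMap g) :
    IsCPMap (f + g) := by
  intro n a h
  have := add_nonneg (hf n a h) (hg n a h)
  simpa [LinearMap.add_apply, ContinuousLinearMap.add_apply, inner_add_right,
    Finset.sum_add_distrib] using this

lemma isCPMap_sum' {ι : Type*} (s : Finset ι) (F : ι → (A →ₗ[ℂ] (H →L[ℂ] H)))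
    (hF : ∀ i ∈ s, IsCPMap (F i)) : IsCPMap (∑ i ∈ s, F i) :=
  Finset.sum_induction F IsCPMap (fun _ _ ha hb => isCPMap_add' ha hb) isCPMap_zero' hF

lemma isCPMap_smul' {f : A →ₗ[ℂ] (H →L[ℂ] H)} (hf : IsCPMap f) {t : ℝ} (ht : 0 ≤ t) :
    IsCPMap ((t : ℂ) • f) := by
  intro n a h
  have h0 : (0:ℂ) ≤ (t:ℂ) := by exact_mod_cast ht
  have e : ∀ i j : Fin n, (inner ℂ (h i) ((((t:ℂ) • f) (star (a i) * a j)) (h j)) : ℂ)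
      = (t:ℂ) * inner ℂ (h i) ((f (star (a i) * a j)) (h j)) := by
    intro i j
    rw [LinearMap.smul_apply, ContinuousLinearMap.smul_apply, inner_smul_right]
  simp only [e, ← Finset.mul_sum]
  exact mul_nonneg h0 (hf n a h)

lemma isCPMap_conjAd [CompleteSpace H] (T : H →L[ℂ] H) {f : A →ₗ[ℂ] (H →L[ℂ] H)}
    (hf : IsCPMap f) : IsCPMap ((conjAd T).comp f) := by
  intro n a h
  have h2 := hf n a (fun i => T (h i))
  simp only [LinearMap.comp_apply, conjAd_apply, ContinuousLinearMap.mul_apply,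
    ContinuousLinearMap.star_eq_adjoint, ContinuousLinearMap.adjoint_inner_right]
  exact h2

lemma cp_zero {Ψ : A →ₗ[ℂ] (H →L[ℂ] H)} (hcp : IsCPMap Ψ) (h1 : Ψ 1 = 0) : Ψ = 0 := by
  have key : ∀ (a : A) (h₁ h₂ : H), (inner ℂ h₁ ((Ψ a) h₂) : ℂ) = 0 := by
    intro a h₁ h₂
    set z : ℂ := inner ℂ h₁ ((Ψ a) h₂) with hz
    set w : ℂ := inner ℂ h₂ ((Ψ (star a)) h₁) with hw
    set K : ℂ := inner ℂ h₂ ((Ψ (star a * a)) h₂) with hK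
    have hkey : ∀ c : ℂ, 0 ≤ (starRingEnd ℂ) c * z + c * w + K := by
      intro c
      have h2 := hcp 2 ![1, a] ![c • h₁, h₂]
      have e : (∑ i, ∑ j, (inner ℂ ((![c • h₁, h₂]) i)
            ((Ψ (star ((![1, a]) i) * (![1, a]) j)) ((![c • h₁, h₂]) j)) : ℂ))
          = (starRingEnd ℂ) c * z + c * w + K := by
        simp [Fin.sum_univ_two, h1, inner_smul_left, inner_smul_right, ← hz, ← hw, ← hK]
        ring
      rwa [e] at h2
    have hu : ∀ c : ℂ, (starRingEnd ℂ) c * z + c * w = 0 := by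
      intro c
      set u : ℂ := (starRingEnd ℂ) c * z + c * w with hu'
      have hs : ∀ s : ℝ, 0 ≤ (s : ℂ) * u + K := by
        intro s
        have h3 := hkey ((s : ℂ) * c)
        have e2 : (starRingEnd ℂ) ((s:ℂ) * c) * z + ((s:ℂ) * c) * w + K
            = (s : ℂ) * u + K := by
          simp only [hu', map_mul, Complex.conj_ofReal]
          ring
        rwa [e2] at h3
      have hre : ∀ s : ℝ, 0 ≤ s * u.re + K.re ∧ s * u.im + K.im = 0 := by
        intro s
        have h4 := hs s
        rw [Complex.le_def] at h4
        constructor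
        · simpa using h4.1
        · simpa using h4.2.symm
      have hKim : K.im = 0 := by simpa using (hre 0).2
      have huim : u.im = 0 := by
        have := (hre 1).2
        rw [hKim] at this
        linarith
      have hure : u.re = 0 := by
        by_contra hne
        have h5 := (hre (-(K.re + 1) / u.re)).1
        rw [div_mul_cancel₀ _ hne] at h5
        linarith
      exact Complex.ext (by simpa using hure) (by simpa using huim)
    have e1 : z + w = 0 := by simpa using hu 1
    have e2 : -Complex.I * z + Complex.I * w = 0 := by simpa [Complex.conj_I] using hu Complex.I
    have hw' : w = -z := by linear_combination e1
    rw [hw'] at e2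
    have h6 : (-2 * Complex.I) * z = 0 := by linear_combination e2
    rcases mul_eq_zero.mp h6 with h | h
    · exact absurd h (mul_ne_zero (by norm_num) Complex.I_ne_zero)
    · exact h
  have key2 : ∀ (a : A) (x : H), (Ψ a) x = 0 := by
    intro a x
    have := key a ((Ψ a) x) x
    rwa [inner_self_eq_zero] at this
  apply LinearMap.ext
  intro a
  apply ContinuousLinearMap.ext
  intro x
  simp [key2]

end AuxLemmas

/-- Proposition `prop-PC-ext-non-empty` (ii). If `Φ : A → B(H)` is a pure CP
map with `Φ(1) = P`, then `Φ` is both a `P`-`C*`-extreme point and a linear extreme point of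
`CP^{(P)}(A, B(H))`. -/
theorem stmt5 {A : Type*} [NormedRing A] [StarRing A] [CStarRing A] [NormedAlgebra ℂ A] [StarModule ℂ A] [CompleteSpace A]
    {H : Type*} [NormedAddCommGroup H] [InnerProductSpace ℂ H] [CompleteSpace H]
    (P : H →L[ℂ] H) (hP : IsPosOp P)
    (Φ : A →ₗ[ℂ] (H →L[ℂ] H)) (hΦcp : IsCPMap Φ) (hΦ1 : Φ 1 = P)
    (hΦpure : ∀ Ψ : A →ₗ[ℂ] (H →L[ℂ] H), IsCPMap Ψ → IsCPMap (Φ - Ψ) →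
      ∃ t : ℝ, 0 ≤ t ∧ t ≤ 1 ∧ Ψ = (t : ℂ) • Φ) :
    IsPCExtreme P Φ ∧ IsLinExtreme (CPP (A := A) P) Φ := by
  classical
  by_cases hP0 : P = 0
  · have hΦ0 : Φ = 0 := cp_zero hΦcp (by rw [hΦ1, hP0])
    constructor
    · refine ⟨⟨hΦcp, hΦ1⟩, ?_⟩
      intro n T Φs hT hΦs hsum heq j
      refine ⟨1, isUnit_one, ?_⟩
      have h0 : Φs j = 0 := cp_zero (hΦs j).1 (by rw [(hΦs j).2, hP0])
      rw [h0, hΦ0]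
      simp
    · refine ⟨⟨hΦcp, hΦ1⟩, ?_⟩
      intro n t Φs ht hΦs hsum heq j
      have h0 : Φs j = 0 := cp_zero (hΦs j).1 (by rw [(hΦs j).2, hP0])
      rw [h0, hΦ0]
  constructor
  · refine ⟨⟨hΦcp, hΦ1⟩, ?_⟩
    intro n T Φs hT hΦs hsum heq j
    set Ψ : Fin n → (A →ₗ[ℂ] (H →L[ℂ] H)) := fun i => (conjAd (T i)).comp (Φs i) with hΨ
    have hΨcp : ∀ i, IsCPMap (Ψ i) := fun i => isCPMap_conjAd (T i) (hΦs i).1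
    have hsub : IsCPMap (Φ - Ψ j) := by
      have hrw : Φ - Ψ j = ∑ i ∈ Finset.univ.erase j, Ψ i := by
        rw [heq, ← Finset.sum_erase_add _ _ (Finset.mem_univ j)]
        abel
      rw [hrw]
      exact isCPMap_sum' _ _ (fun i _ => hΨcp i)
    obtain ⟨t, ht0, ht1, hteq⟩ := hΦpure (Ψ j) (hΨcp j) hsub
    obtain ⟨u, hu⟩ := hT j
    set V : H →L[ℂ] H := ↑u⁻¹ with hV
    have hTV : T j * V = 1 := by rw [← hu]; exact u.mul_inv
    have hVT : V * T j = 1 := by rw [← hu]; exact u.inv_mul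
    have hsVT : star V * star (T j) = 1 := by rw [← star_mul, hTV, star_one]
    have hΦs_eq : ∀ a : A, Φs j a = (t : ℂ) • (star V * Φ a * V) := by
      intro a
      have h1' : star (T j) * Φs j a * T j = (t : ℂ) • Φ a := by
        have h2 := LinearMap.congr_fun hteq a
        simpa [hΨ] using h2
      calc Φs j a = (star V * star (T j)) * Φs j a * (T j * V) := by
            rw [hsVT, hTV, one_mul, mul_one]
        _ = star V * (star (T j) * Φs j a * T j) * V := by simp only [mul_assoc]
        _ = star V * ((t : ℂ) • Φ a) * V := by rw [h1']
        _ = (t : ℂ) • (star V * Φ a * V) := by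
            simp only [mul_smul_comm, smul_mul_assoc]
    have htpos : 0 < t := by
      rcases ht0.lt_or_eq with h | h
      · exact h
      · exfalso
        apply hP0
        have hthis : P = (t : ℂ) • (star V * P * V) := by
          have h2 := hΦs_eq 1
          rwa [(hΦs j).2, hΦ1] at h2
        rw [hthis, ← h]
        simp
    set r : ℝ := Real.sqrt t with hr
    have hrne' : r ≠ 0 := by
      rw [hr]
      exact Real.sqrt_ne_zero'.mpr htpos
    have hrne : (r : ℂ) ≠ 0 := Complex.ofReal_ne_zero.mpr hrne'
    have hrr : (r : ℂ) * (r : ℂ) = (t : ℂ) := by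
      rw [← Complex.ofReal_mul, Real.mul_self_sqrt ht0]
    refine ⟨(r : ℂ) • V, ?_, ?_⟩
    · have e1 : ((r:ℂ) • V) * ((r:ℂ)⁻¹ • (T j)) = 1 := by
        have e : ((r:ℂ) • V) * ((r:ℂ)⁻¹ • (T j)) = ((r:ℂ) * (r:ℂ)⁻¹) • (V * T j) := by
          simp only [smul_mul_assoc, mul_smul_comm, smul_smul, mul_comm]
        rw [e, hVT, mul_inv_cancel₀ hrne, one_smul]
      have e2 : ((r:ℂ)⁻¹ • (T j)) * ((r:ℂ) • V) = 1 := by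
        have e : ((r:ℂ)⁻¹ • (T j)) * ((r:ℂ) • V) = ((r:ℂ)⁻¹ * (r:ℂ)) • (T j * V) := by
          simp only [smul_mul_assoc, mul_smul_comm, smul_smul, mul_comm]
        rw [e, hTV, inv_mul_cancel₀ hrne, one_smul]
      exact ⟨⟨(r:ℂ) • V, (r:ℂ)⁻¹ • (T j), e1, e2⟩, rfl⟩
    · apply LinearMap.ext
      intro a
      have hS : star ((r:ℂ) • V) * Φ a * ((r:ℂ) • V) = (t : ℂ) • (star V * Φ a * V) := by
        rw [star_smul, Complex.star_def, Complex.conj_ofReal]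
        simp only [smul_mul_assoc, mul_smul_comm, smul_smul]
        rw [hrr]
      show Φs j a = star ((r:ℂ) • V) * Φ a * ((r:ℂ) • V)
      rw [hS, hΦs_eq a]
  · refine ⟨⟨hΦcp, hΦ1⟩, ?_⟩
    intro n t Φs ht hΦs hsum heq j
    set Ψ : Fin n → (A →ₗ[ℂ] (H →L[ℂ] H)) := fun i => (t i : ℂ) • Φs i with hΨ
    have hΨcp : ∀ i, IsCPMap (Ψ i) := fun i => isCPMap_smul' (hΦs i).1 (le_of_lt (ht i).1)
    have hsub : IsCPMap (Φ - Ψ j) := by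
      have hrw : Φ - Ψ j = ∑ i ∈ Finset.univ.erase j, Ψ i := by
        rw [heq, ← Finset.sum_erase_add _ _ (Finset.mem_univ j)]
        abel
      rw [hrw]
      exact isCPMap_sum' _ _ (fun i _ => hΨcp i)
    obtain ⟨c, hc0, hc1, hceq⟩ := hΦpure (Ψ j) (hΨcp j) hsub
    have htj : (t j : ℂ) ≠ 0 := by
      exact_mod_cast (ht j).1.ne'
    have hΦseq : Φs j = ((c : ℂ) / (t j : ℂ)) • Φ := by
      have h2 : (t j : ℂ) • Φs j = (c : ℂ) • Φ := hceq
      calc Φs j = (t j : ℂ)⁻¹ • ((t j : ℂ) • Φs j) := by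
            rw [smul_smul, inv_mul_cancel₀ htj, one_smul]
        _ = (t j : ℂ)⁻¹ • ((c : ℂ) • Φ) := by rw [h2]
        _ = ((c : ℂ) / (t j : ℂ)) • Φ := by
            rw [smul_smul, div_eq_mul_inv, mul_comm]
    have hd : ((c : ℂ) / (t j : ℂ)) = 1 := by
      have h3 := LinearMap.congr_fun hΦseq 1
      rw [(hΦs j).2, LinearMap.smul_apply, hΦ1] at h3
      by_contra hne
      apply hP0
      have h4 : (((c : ℂ) / (t j : ℂ)) - 1) • P = 0 := by
        rw [sub_smul, one_smul, ← h3, sub_self]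
      rcases smul_eq_zero.mp h4 with h | h
      · exact absurd (sub_eq_zero.mp h) hne
      · exact h
    rw [hΦseq, hd, one_smul]


end
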